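/- arXiv:2206.05062 — 2 statements merged into one kernel-verified Lean document; each statement's English description precedes it below -/
import Mathlib

section
/- For all nonnegative integers n, m, p: Σ_{k=0}^{n} Σ_{l=0}^{m} (−1)^l · P(n−k, m−l, p) · Q(k, l, p) = 1 if n = 0 and m = 0, and = 0 otherwise. -/
/-- `P n m p` : number of integer partitions of `n` into exactly `m` parts
with each part at most `p`. -/
def P (n m p : ℕ) : ℕ :=
  Fintype.card {π : n.Partition // π.parts.card = m ∧ ∀ i ∈ π.parts, i ≤ p}

/-- `Q n m p` : number of integer partitions of `n` into exactly `m` distinct parts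
with each part at most `p`. -/
def Q (n m p : ℕ) : ℕ :=
  Fintype.card {π : n.Partition // π.parts.card = m ∧ π.parts.Nodup ∧ ∀ i ∈ π.parts, i ≤ p}

open Finset

lemma P_zero (n m : ℕ) : P n m 0 = if n = 0 ∧ m = 0 then 1 else 0 := by
  rw [P]
  by_cases h : n = 0 ∧ m = 0
  · obtain ⟨hn, hm⟩ := h
    subst hn; subst hm
    rw [if_pos ⟨rfl, rfl⟩]
    rw [Fintype.card_eq_one_iff]
    refine ⟨⟨⟨0, by simp, by simp⟩, by simp⟩, ?_⟩
    rintro ⟨⟨s, hpos, hsum⟩, hc⟩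
    have : s = 0 := by
      by_contra hne
      obtain ⟨a, ha⟩ := Multiset.exists_mem_of_ne_zero hne
      have h1 := hpos ha
      have h2 : a ≤ s.sum := Multiset.le_sum_of_mem ha
      omega
    subst this
    rfl
  · rw [if_neg h, Fintype.card_eq_zero_iff]
    constructor
    rintro ⟨⟨s, hpos, hsum⟩, hc, hle⟩
    have : s = 0 := by
      by_contra hne
      obtain ⟨a, ha⟩ := Multiset.exists_mem_of_ne_zero hne
      have := hpos ha
      have := hle a ha
      omega
    subst this
    simp at hc hsum
    exact h ⟨hsum.symm, hc.symm⟩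

lemma Q_zero (n m : ℕ) : Q n m 0 = if n = 0 ∧ m = 0 then 1 else 0 := by
  rw [Q]
  by_cases h : n = 0 ∧ m = 0
  · obtain ⟨hn, hm⟩ := h
    subst hn; subst hm
    rw [if_pos ⟨rfl, rfl⟩]
    rw [Fintype.card_eq_one_iff]
    refine ⟨⟨⟨0, by simp, by simp⟩, by simp⟩, ?_⟩
    rintro ⟨⟨s, hpos, hsum⟩, hc⟩
    have : s = 0 := by
      by_contra hne
      obtain ⟨a, ha⟩ := Multiset.exists_mem_of_ne_zero hne
      have h1 := hpos ha
      have h2 : a ≤ s.sum := Multiset.le_sum_of_mem ha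
      omega
    subst this
    rfl
  · rw [if_neg h, Fintype.card_eq_zero_iff]
    constructor
    rintro ⟨⟨s, hpos, hsum⟩, hc, _, hle⟩
    have : s = 0 := by
      by_contra hne
      obtain ⟨a, ha⟩ := Multiset.exists_mem_of_ne_zero hne
      have := hpos ha
      have := hle a ha
      omega
    subst this
    simp at hc hsum
    exact h ⟨hsum.symm, hc.symm⟩

lemma P_succ (n m p : ℕ) :
    P n m (p+1) = P n m p + (if p+1 ≤ n ∧ 1 ≤ m then P (n-(p+1)) (m-1) (p+1) else 0) := by
  classical
  rw [P, P, Fintype.card_subtype, Fintype.card_subtype]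
  set A : Finset n.Partition :=
    univ.filter (fun π => π.parts.card = m ∧ ∀ i ∈ π.parts, i ≤ p + 1) with hA
  have hsplit : ((A.filter (fun π => (p+1) ∉ π.parts)).card
      + (A.filter (fun π => (p+1) ∈ π.parts)).card) = A.card := by
    rw [add_comm]
    exact Finset.card_filter_add_card_filter_not (s := A) (fun (π : n.Partition) => (p+1) ∈ π.parts)
  rw [← hsplit]
  congr 1
  · -- no part equal to p+1  ↔  all parts ≤ p
    congr 1
    rw [hA, Finset.filter_filter]
    apply Finset.filter_congr
    intro π _
    constructor
    · rintro ⟨⟨hc, hle⟩, hnm⟩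
      refine ⟨hc, fun i hi => ?_⟩
      have := hle i hi
      have : i ≠ p + 1 := fun h => hnm (h ▸ hi)
      omega
    · rintro ⟨hc, hle⟩
      refine ⟨⟨hc, fun i hi => by have := hle i hi; omega⟩, fun hmem => ?_⟩
      have := hle _ hmem
      omega
  · -- contains a part p+1
    by_cases hg : p+1 ≤ n ∧ 1 ≤ m
    · rw [if_pos hg]
      rw [P, Fintype.card_subtype]
      apply Finset.card_bij
        (i := fun (π : n.Partition) (hπ : π ∈ A.filter (fun π => (p+1) ∈ π.parts)) =>
          (⟨π.parts.erase (p+1),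
            fun {i} hi => π.parts_pos (Multiset.mem_of_mem_erase hi),
            by
              have hmem : (p+1) ∈ π.parts := (Finset.mem_filter.1 hπ).2
              have := Multiset.cons_erase hmem
              have hs : ((p+1) ::ₘ π.parts.erase (p+1)).sum = n := by rw [this, π.parts_sum]
              simp only [Multiset.sum_cons] at hs
              omega⟩ : (n - (p+1)).Partition))
      · -- maps into target
        intro π hπ
        simp only [Finset.mem_filter, Finset.mem_univ, true_and, hA] at hπ ⊢
        obtain ⟨⟨hc, hle⟩, hmem⟩ := hπ
        constructor
        · rw [Multiset.card_erase_of_mem hmem, hc]; rfl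
        · intro i hi
          exact hle i (Multiset.mem_of_mem_erase hi)
      · -- injective
        intro π₁ h₁ π₂ h₂ heq
        have hm₁ : (p+1) ∈ π₁.parts := (Finset.mem_filter.1 h₁).2
        have hm₂ : (p+1) ∈ π₂.parts := (Finset.mem_filter.1 h₂).2
        have : π₁.parts.erase (p+1) = π₂.parts.erase (p+1) := congrArg Nat.Partition.parts heq
        ext1
        rw [← Multiset.cons_erase hm₁, ← Multiset.cons_erase hm₂, this]
      · -- surjective
        intro σ hσ
        simp only [Finset.mem_filter, Finset.mem_univ, true_and] at hσ
        obtain ⟨hc, hle⟩ := hσ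
        refine ⟨⟨(p+1) ::ₘ σ.parts,
          fun {i} hi => ?_,
          by simp only [Multiset.sum_cons, σ.parts_sum]; omega⟩, ?_, ?_⟩
        · rcases Multiset.mem_cons.1 hi with h | h
          · omega
          · exact σ.parts_pos h
        · simp only [Finset.mem_filter, Finset.mem_univ, true_and, hA]
          refine ⟨⟨?_, ?_⟩, ?_⟩
          · simp only [Multiset.card_cons, hc]; omega
          · intro i hi
            rcases Multiset.mem_cons.1 hi with h | h
            · omega
            · exact hle i h
          · exact Multiset.mem_cons_self _ _
        · ext1
          simp [Multiset.erase_cons_head]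
    · rw [if_neg hg]
      rw [Finset.card_eq_zero]
      apply Finset.filter_false_of_mem
      intro π hπ
      simp only [hA, Finset.mem_filter, Finset.mem_univ, true_and] at hπ
      intro hmem
      have h1 : p + 1 ≤ π.parts.sum := Multiset.le_sum_of_mem hmem
      have h2 : 0 < π.parts.card := Multiset.card_pos_iff_exists_mem.2 ⟨_, hmem⟩
      rw [π.parts_sum] at h1
      rw [hπ.1] at h2
      exact hg ⟨h1, h2⟩

lemma Q_succ (n m p : ℕ) :
    Q n m (p+1) = Q n m p + (if p+1 ≤ n ∧ 1 ≤ m then Q (n-(p+1)) (m-1) p else 0) := by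
  classical
  rw [Q, Q, Fintype.card_subtype, Fintype.card_subtype]
  set A : Finset n.Partition :=
    univ.filter (fun π => π.parts.card = m ∧ π.parts.Nodup ∧ ∀ i ∈ π.parts, i ≤ p + 1) with hA
  have hsplit : ((A.filter (fun π => (p+1) ∉ π.parts)).card
      + (A.filter (fun π => (p+1) ∈ π.parts)).card) = A.card := by
    rw [add_comm]
    exact Finset.card_filter_add_card_filter_not (s := A)
      (fun (π : n.Partition) => (p+1) ∈ π.parts)
  rw [← hsplit]
  congr 1
  · congr 1
    rw [hA, Finset.filter_filter]
    apply Finset.filter_congr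
    intro π _
    constructor
    · rintro ⟨⟨hc, hnd, hle⟩, hnm⟩
      refine ⟨hc, hnd, fun i hi => ?_⟩
      have := hle i hi
      have : i ≠ p + 1 := fun h => hnm (h ▸ hi)
      omega
    · rintro ⟨hc, hnd, hle⟩
      refine ⟨⟨hc, hnd, fun i hi => by have := hle i hi; omega⟩, fun hmem => ?_⟩
      have := hle _ hmem
      omega
  · by_cases hg : p+1 ≤ n ∧ 1 ≤ m
    · rw [if_pos hg]
      rw [Q, Fintype.card_subtype]
      apply Finset.card_bij
        (i := fun (π : n.Partition) (hπ : π ∈ A.filter (fun π => (p+1) ∈ π.parts)) =>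
          (⟨π.parts.erase (p+1),
            fun {i} hi => π.parts_pos (Multiset.mem_of_mem_erase hi),
            by
              have hmem : (p+1) ∈ π.parts := (Finset.mem_filter.1 hπ).2
              have := Multiset.cons_erase hmem
              have hs : ((p+1) ::ₘ π.parts.erase (p+1)).sum = n := by rw [this, π.parts_sum]
              simp only [Multiset.sum_cons] at hs
              omega⟩ : (n - (p+1)).Partition))
      · intro π hπ
        simp only [Finset.mem_filter, Finset.mem_univ, true_and, hA] at hπ ⊢
        obtain ⟨⟨hc, hnd, hle⟩, hmem⟩ := hπ
        refine ⟨?_, ?_, ?_⟩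
        · rw [Multiset.card_erase_of_mem hmem, hc]; rfl
        · exact hnd.erase _
        · intro i hi
          have h1 := hle i (Multiset.mem_of_mem_erase hi)
          have h2 : i ≠ p + 1 := ((Multiset.Nodup.mem_erase_iff hnd).1 hi).1
          omega
      · intro π₁ h₁ π₂ h₂ heq
        have hm₁ : (p+1) ∈ π₁.parts := (Finset.mem_filter.1 h₁).2
        have hm₂ : (p+1) ∈ π₂.parts := (Finset.mem_filter.1 h₂).2
        have : π₁.parts.erase (p+1) = π₂.parts.erase (p+1) := congrArg Nat.Partition.parts heq
        ext1
        rw [← Multiset.cons_erase hm₁, ← Multiset.cons_erase hm₂, this]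
      · intro σ hσ
        simp only [Finset.mem_filter, Finset.mem_univ, true_and] at hσ
        obtain ⟨hc, hnd, hle⟩ := hσ
        have hnotmem : (p+1) ∉ σ.parts := fun h => by have := hle _ h; omega
        refine ⟨⟨(p+1) ::ₘ σ.parts,
          fun {i} hi => ?_,
          by simp only [Multiset.sum_cons, σ.parts_sum]; omega⟩, ?_, ?_⟩
        · rcases Multiset.mem_cons.1 hi with h | h
          · omega
          · exact σ.parts_pos h
        · simp only [Finset.mem_filter, Finset.mem_univ, true_and, hA]
          refine ⟨⟨?_, ?_, ?_⟩, ?_⟩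
          · simp only [Multiset.card_cons, hc]; omega
          · exact Multiset.nodup_cons.2 ⟨hnotmem, hnd⟩
          · intro i hi
            rcases Multiset.mem_cons.1 hi with h | h
            · omega
            · have := hle i h; omega
          · exact Multiset.mem_cons_self _ _
        · ext1
          simp [Multiset.erase_cons_head]
    · rw [if_neg hg]
      rw [Finset.card_eq_zero]
      apply Finset.filter_false_of_mem
      intro π hπ
      simp only [hA, Finset.mem_filter, Finset.mem_univ, true_and] at hπ
      intro hmem
      have h1 : p + 1 ≤ π.parts.sum := Multiset.le_sum_of_mem hmem
      have h2 : 0 < π.parts.card := Multiset.card_pos_iff_exists_mem.2 ⟨_, hmem⟩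
      rw [π.parts_sum] at h1
      rw [hπ.1] at h2
      exact hg ⟨h1, h2⟩

lemma sum_shift (g : ℕ → ℤ) (q : ℕ) : ∀ N,
    ∑ k ∈ Finset.range N, (if q ≤ k then g (k-q) else 0) = ∑ j ∈ Finset.range (N - q), g j := by
  intro N
  induction N with
  | zero => simp
  | succ N ih =>
    rw [Finset.sum_range_succ, ih]
    by_cases h : q ≤ N
    · rw [if_pos h]
      have hN : N + 1 - q = (N - q) + 1 := by omega
      rw [hN, Finset.sum_range_succ]
    · rw [if_neg h]
      have h1 : N + 1 - q = 0 := by omega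
      have h2 : N - q = 0 := by omega
      rw [h1, h2, add_zero]

lemma sum_trunc (g : ℕ → ℤ) (N' N : ℕ) (h : N' ≤ N) :
    ∑ k ∈ Finset.range N, (if k < N' then g k else 0) = ∑ k ∈ Finset.range N', g k := by
  rw [← Finset.sum_filter]
  congr 1
  ext k
  simp only [Finset.mem_filter, Finset.mem_range]
  omega

def Dfun (p a b : ℕ) : ℤ :=
  ∑ k ∈ Finset.range (a+1), ∑ l ∈ Finset.range (b+1),
    (-1:ℤ)^l * (P (a-k) (b-l) (p+1) : ℤ) * (Q k l p : ℤ)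

lemma tail_eq (p a b : ℕ) :
    ∑ k ∈ Finset.range (a-p), ∑ l ∈ Finset.range b,
      (-1:ℤ)^l * (P ((a-(p+1))-k) ((b-1)-l) (p+1) : ℤ) * (Q k l p : ℤ)
    = if p+1 ≤ a ∧ 1 ≤ b then Dfun p (a-(p+1)) (b-1) else 0 := by
  by_cases hg : p+1 ≤ a ∧ 1 ≤ b
  · rw [if_pos hg, Dfun]
    have h1 : a - p = (a - (p+1)) + 1 := by omega
    have h2 : b = (b-1) + 1 := by omega
    rw [h1]
    conv_lhs => rw [h2]
    simp only [Nat.add_sub_cancel]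
  · rw [if_neg hg]
    by_cases h1 : p+1 ≤ a
    · have hb : b = 0 := by omega
      simp [hb]
    · have ha : a - p = 0 := by omega
      simp [ha]

lemma D_rec (p : ℕ)
    (ih : ∀ a b : ℕ, ∑ k ∈ Finset.range (a + 1), ∑ l ∈ Finset.range (b + 1),
      (-1 : ℤ) ^ l * (P (a - k) (b - l) p : ℤ) * (Q k l p : ℤ)
      = if a = 0 ∧ b = 0 then 1 else 0) (a b : ℕ) :
    Dfun p a b = (if a = 0 ∧ b = 0 then 1 else 0)
      + (if p+1 ≤ a ∧ 1 ≤ b then Dfun p (a-(p+1)) (b-1) else 0) := by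
  have hPr : ∀ x y : ℕ, (P x y (p+1) : ℤ)
      = (P x y p : ℤ) + (if p+1 ≤ x ∧ 1 ≤ y then (P (x-(p+1)) (y-1) (p+1) : ℤ) else 0) := by
    intro x y
    rw [P_succ]
    push_cast [apply_ite (fun t : ℕ => (t : ℤ))]
    ring
  have point : ∀ k ∈ Finset.range (a+1), ∀ l ∈ Finset.range (b+1),
      (-1:ℤ)^l * (P (a-k) (b-l) (p+1) : ℤ) * (Q k l p : ℤ)
      = (-1:ℤ)^l * (P (a-k) (b-l) p : ℤ) * (Q k l p : ℤ)
        + (if k < a - p then (if l < b then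
            ((-1:ℤ)^l * (P ((a-(p+1))-k) ((b-1)-l) (p+1) : ℤ) * (Q k l p : ℤ)) else 0) else 0) := by
    intro k hk l hl
    rw [Finset.mem_range] at hk hl
    rw [hPr]
    by_cases hC : k < a - p ∧ l < b
    · rw [if_pos (by omega : p+1 ≤ a-k ∧ 1 ≤ b-l), if_pos hC.1, if_pos hC.2]
      have e1 : a - k - (p+1) = a - (p+1) - k := by omega
      have e2 : b - l - 1 = b - 1 - l := by omega
      rw [e1, e2]
      ring
    · rw [if_neg (by omega : ¬(p+1 ≤ a-k ∧ 1 ≤ b-l))]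
      by_cases h1 : k < a - p
      · rw [if_pos h1, if_neg (by omega)]
        ring
      · rw [if_neg h1]
        ring
  rw [Dfun]
  rw [Finset.sum_congr rfl (fun k hk => Finset.sum_congr rfl (point k hk))]
  have split : ∀ k ∈ Finset.range (a+1),
      (∑ l ∈ Finset.range (b+1),
        ((-1:ℤ)^l * (P (a-k) (b-l) p : ℤ) * (Q k l p : ℤ)
        + (if k < a - p then (if l < b then
            ((-1:ℤ)^l * (P ((a-(p+1))-k) ((b-1)-l) (p+1) : ℤ) * (Q k l p : ℤ)) else 0) else 0)))
      = (∑ l ∈ Finset.range (b+1), (-1:ℤ)^l * (P (a-k) (b-l) p : ℤ) * (Q k l p : ℤ))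
        + (if k < a - p then (∑ l ∈ Finset.range b,
            ((-1:ℤ)^l * (P ((a-(p+1))-k) ((b-1)-l) (p+1) : ℤ) * (Q k l p : ℤ))) else 0) := by
    intro k hk
    rw [Finset.sum_add_distrib]
    congr 1
    rw [Finset.sum_ite_irrel]
    congr 1
    · exact sum_trunc _ b (b+1) (by omega)
    · exact Finset.sum_const_zero
  rw [Finset.sum_congr rfl split, Finset.sum_add_distrib, ih]
  congr 1
  rw [← tail_eq p a b]
  exact sum_trunc _ (a-p) (a+1) (by omega)

theorem stmt_10 (n m p : ℕ) :
    ∑ k ∈ Finset.range (n + 1), ∑ l ∈ Finset.range (m + 1),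
      (-1 : ℤ) ^ l * P (n - k) (m - l) p * Q k l p
    = if n = 0 ∧ m = 0 then 1 else 0 := by
  induction p generalizing n m with
  | zero =>
    have key : ∀ k ∈ Finset.range (n+1), ∀ l ∈ Finset.range (m+1),
        (-1:ℤ)^l * (P (n-k) (m-l) 0 : ℤ) * (Q k l 0 : ℤ)
        = if k = 0 then (if l = 0 then (if n = 0 ∧ m = 0 then (1:ℤ) else 0) else 0) else 0 := by
      intro k hk l hl
      by_cases hk0 : k = 0
      · by_cases hl0 : l = 0
        · subst hk0; subst hl0
          simp [P_zero, Q_zero, apply_ite (fun t : ℕ => (t : ℤ))]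
        · simp [Q_zero, hk0, hl0]
      · simp [Q_zero, hk0]
    rw [Finset.sum_congr rfl (fun k hk => Finset.sum_congr rfl (key k hk))]
    simp [Finset.sum_ite_irrel, Finset.sum_ite_eq']
  | succ p ih =>
    have hQr : ∀ x y : ℕ, (Q x y (p+1) : ℤ)
        = (Q x y p : ℤ) + (if p+1 ≤ x ∧ 1 ≤ y then (Q (x-(p+1)) (y-1) p : ℤ) else 0) := by
      intro x y
      rw [Q_succ]
      push_cast [apply_ite (fun t : ℕ => (t : ℤ))]
      ring
    have point : ∀ k ∈ Finset.range (n+1), ∀ l ∈ Finset.range (m+1),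
        (-1:ℤ)^l * (P (n-k) (m-l) (p+1) : ℤ) * (Q k l (p+1) : ℤ)
        = (-1:ℤ)^l * (P (n-k) (m-l) (p+1) : ℤ) * (Q k l p : ℤ)
          + (if p+1 ≤ k then (if 1 ≤ l then
              ((-1:ℤ)^l * (P (n-k) (m-l) (p+1) : ℤ) * (Q (k-(p+1)) (l-1) p : ℤ)) else 0) else 0) := by
      intro k hk l hl
      rw [hQr]
      by_cases hC : p+1 ≤ k ∧ 1 ≤ l
      · rw [if_pos hC, if_pos hC.1, if_pos hC.2]
        ring
      · rw [if_neg hC]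
        by_cases h1 : p+1 ≤ k
        · rw [if_pos h1, if_neg (by omega)]
          ring
        · rw [if_neg h1]
          ring
    rw [Finset.sum_congr rfl (fun k hk => Finset.sum_congr rfl (point k hk))]
    -- now split and reindex
    have inner : ∀ k ∈ Finset.range (n+1),
        (∑ l ∈ Finset.range (m+1),
          ((-1:ℤ)^l * (P (n-k) (m-l) (p+1) : ℤ) * (Q k l p : ℤ)
          + (if p+1 ≤ k then (if 1 ≤ l then
              ((-1:ℤ)^l * (P (n-k) (m-l) (p+1) : ℤ) * (Q (k-(p+1)) (l-1) p : ℤ)) else 0) else 0)))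
        = (∑ l ∈ Finset.range (m+1), (-1:ℤ)^l * (P (n-k) (m-l) (p+1) : ℤ) * (Q k l p : ℤ))
          + (if p+1 ≤ k then
              -(∑ l ∈ Finset.range m,
                ((-1:ℤ)^l * (P (n-k) ((m-1)-l) (p+1) : ℤ) * (Q (k-(p+1)) l p : ℤ))) else 0) := by
      intro k hk
      rw [Finset.sum_add_distrib]
      congr 1
      rw [Finset.sum_ite_irrel]
      congr 1
      · -- reindex l ↦ l-1
        have repoint : ∀ l ∈ Finset.range (m+1),
            (if 1 ≤ l then
              ((-1:ℤ)^l * (P (n-k) (m-l) (p+1) : ℤ) * (Q (k-(p+1)) (l-1) p : ℤ)) else 0)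
            = (if 1 ≤ l then
              (-((-1:ℤ)^(l-1) * (P (n-k) ((m-1)-(l-1)) (p+1) : ℤ) * (Q (k-(p+1)) (l-1) p : ℤ))) else 0) := by
          intro l hl
          by_cases h1 : 1 ≤ l
          · rw [if_pos h1, if_pos h1]
            have e1 : m - l = (m-1) - (l-1) := by omega
            have e2 : (-1:ℤ)^l = -(-1:ℤ)^(l-1) := by
              have h : l = (l-1) + 1 := by omega
              conv_lhs => rw [h]
              rw [pow_succ]
              ring
            rw [e1, e2]
            ring
          · rw [if_neg h1, if_neg h1]
        rw [Finset.sum_congr rfl repoint,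
          sum_shift (fun j => -((-1:ℤ)^j * (P (n-k) ((m-1)-j) (p+1) : ℤ) * (Q (k-(p+1)) j p : ℤ))) 1 (m+1)]
        simp only [Nat.add_sub_cancel]
        rw [← Finset.sum_neg_distrib]
      · exact Finset.sum_const_zero
    rw [Finset.sum_congr rfl inner, Finset.sum_add_distrib]
    have first : (∑ k ∈ Finset.range (n+1), ∑ l ∈ Finset.range (m+1),
        (-1:ℤ)^l * (P (n-k) (m-l) (p+1) : ℤ) * (Q k l p : ℤ)) = Dfun p n m := rfl
    have second : (∑ k ∈ Finset.range (n+1),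
        (if p+1 ≤ k then
          -(∑ l ∈ Finset.range m,
            ((-1:ℤ)^l * (P (n-k) ((m-1)-l) (p+1) : ℤ) * (Q (k-(p+1)) l p : ℤ))) else 0))
        = -(if p+1 ≤ n ∧ 1 ≤ m then Dfun p (n-(p+1)) (m-1) else 0) := by
      have repoint : ∀ k ∈ Finset.range (n+1),
          (if p+1 ≤ k then
            -(∑ l ∈ Finset.range m,
              ((-1:ℤ)^l * (P (n-k) ((m-1)-l) (p+1) : ℤ) * (Q (k-(p+1)) l p : ℤ))) else 0)
          = (if p+1 ≤ k then
            -(∑ l ∈ Finset.range m,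
              ((-1:ℤ)^l * (P ((n-(p+1))-(k-(p+1))) ((m-1)-l) (p+1) : ℤ) * (Q (k-(p+1)) l p : ℤ))) else 0) := by
        intro k hk
        rw [Finset.mem_range] at hk
        by_cases h1 : p+1 ≤ k
        · rw [if_pos h1, if_pos h1]
          have e1 : n - k = (n-(p+1)) - (k-(p+1)) := by omega
          rw [e1]
        · rw [if_neg h1, if_neg h1]
      rw [Finset.sum_congr rfl repoint,
        sum_shift (fun j => -(∑ l ∈ Finset.range m,
          ((-1:ℤ)^l * (P ((n-(p+1))-j) ((m-1)-l) (p+1) : ℤ) * (Q j l p : ℤ)))) (p+1) (n+1)]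
      have e2 : n + 1 - (p+1) = n - p := by omega
      rw [e2, Finset.sum_neg_distrib, tail_eq p n m]
    rw [first, second, D_rec p ih n m]
    ring
end

section
/- For all nonnegative integers n and m, the following identity holds in ℚ(q): Σ_{k=0}^{⌊n/2⌋} q^{C(n−2k,2)} · [m+1 choose n−2k]_q · [m+k choose m]_{q^2} = [m+n choose m]_q. -/
/-- The Gaussian (q-)binomial coefficient `[a choose b]` with parameter `x`,
`∏_{j=1}^{b} (1 - x^{a-b+j})/(1 - x^j)`, an element of `ℚ(q)` when `x = q`;
it is zero when `b > a`. -/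
noncomputable def qbinom (x : RatFunc ℚ) (a b : ℕ) : RatFunc ℚ :=
  if b ≤ a then ∏ j ∈ Finset.range b, (1 - x ^ (a - b + j + 1)) / (1 - x ^ (j + 1)) else 0

/-- The indeterminate `q` of the field of rational functions `ℚ(q)`. -/
noncomputable def q : RatFunc ℚ := RatFunc.X

lemma q_pow_ne_one {i : ℕ} (hi : 1 ≤ i) : q ^ i ≠ 1 := by
  intro h
  have : (Polynomial.X : Polynomial ℚ) ^ i = 1 := by
    apply RatFunc.algebraMap_injective ℚ
    simpa [q, map_pow, RatFunc.algebraMap_X] using h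
  have := congrArg Polynomial.natDegree this
  simp [Polynomial.natDegree_X_pow] at this
  omega

lemma one_sub_q_pow_ne {e i : ℕ} (he : 1 ≤ e) (hi : 1 ≤ i) : 1 - (q ^ e) ^ i ≠ 0 := by
  rw [← pow_mul, sub_ne_zero]
  intro h
  exact q_pow_ne_one (Nat.one_le_iff_ne_zero.2 (by positivity)) h.symm

lemma qbinom_zero (x : RatFunc ℚ) (a : ℕ) : qbinom x a 0 = 1 := by simp [qbinom]

lemma qbinom_eq_zero (x : RatFunc ℚ) {a b : ℕ} (h : a < b) : qbinom x a b = 0 := by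
  simp [qbinom, Nat.not_le.2 h]

lemma qbinom_self {e : ℕ} (he : 1 ≤ e) (a : ℕ) : qbinom (q ^ e) a a = 1 := by
  rw [qbinom, if_pos le_rfl]
  apply Finset.prod_eq_one
  intro j hj
  rw [Nat.sub_self, Nat.zero_add, div_self (one_sub_q_pow_ne he (by omega))]

lemma prod_den_ne {e : ℕ} (he : 1 ≤ e) (b : ℕ) :
    ∏ j ∈ Finset.range b, (1 - (q ^ e) ^ (j + 1)) ≠ 0 :=
  Finset.prod_ne_zero_iff.2 fun j _ => one_sub_q_pow_ne he (by omega)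

lemma qbinom_eq_div {e : ℕ} (he : 1 ≤ e) {a b : ℕ} (h : b ≤ a) :
    qbinom (q ^ e) a b = (∏ j ∈ Finset.range b, (1 - (q ^ e) ^ (a - b + j + 1))) /
      (∏ j ∈ Finset.range b, (1 - (q ^ e) ^ (j + 1))) := by
  rw [qbinom, if_pos h, Finset.prod_div_distrib]

lemma L1 {e : ℕ} (he : 1 ≤ e) {a b : ℕ} (h : b ≤ a) :
    qbinom (q ^ e) (a + 1) (b + 1) * (1 - (q ^ e) ^ (b + 1))
      = qbinom (q ^ e) a b * (1 - (q ^ e) ^ (a + 1)) := by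
  rw [qbinom_eq_div he (by omega), qbinom_eq_div he h]
  have h1 : ∀ j : ℕ, a + 1 - (b + 1) + j + 1 = a - b + j + 1 := by omega
  simp only [h1]
  rw [Finset.prod_range_succ (fun j => 1 - (q ^ e) ^ (a - b + j + 1)),
      Finset.prod_range_succ (fun j => 1 - (q ^ e) ^ (j + 1))]
  have h2 : a - b + b + 1 = a + 1 := by omega
  rw [h2]
  have d1 := prod_den_ne he b
  have d2 := one_sub_q_pow_ne he (i := b + 1) (by omega)
  field_simp

lemma L3 {e : ℕ} (he : 1 ≤ e) {a b : ℕ} (h : b + 1 ≤ a) :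
    qbinom (q ^ e) a (b + 1) * (1 - (q ^ e) ^ (b + 1))
      = qbinom (q ^ e) a b * (1 - (q ^ e) ^ (a - b)) := by
  rw [qbinom_eq_div he h, qbinom_eq_div he (by omega)]
  have h1 : ∀ j : ℕ, a - (b + 1) + j + 1 = a - b + j := by omega
  simp only [h1]
  rw [Finset.prod_range_succ' (fun j => 1 - (q ^ e) ^ (a - b + j)),
      Finset.prod_range_succ (fun j => 1 - (q ^ e) ^ (j + 1))]
  simp only [Nat.add_zero]
  have h2 : ∀ j : ℕ, a - b + (j + 1) = a - b + j + 1 := fun j => by omega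
  simp only [h2]
  have d1 := prod_den_ne he b
  have d2 := one_sub_q_pow_ne he (i := b + 1) (by omega)
  field_simp

lemma qbinom_ne_zero {e : ℕ} (he : 1 ≤ e) {a b : ℕ} (h : b ≤ a) :
    qbinom (q ^ e) a b ≠ 0 := by
  rw [qbinom_eq_div he h]
  apply div_ne_zero _ (prod_den_ne he b)
  exact Finset.prod_ne_zero_iff.2 fun j _ => one_sub_q_pow_ne he (by omega)

/-- Pascal I: `[a+1, b+1] = [a, b] + x^(b+1) [a, b+1]`, unconditionally. -/
lemma pascal1 {e : ℕ} (he : 1 ≤ e) (a b : ℕ) :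
    qbinom (q ^ e) (a + 1) (b + 1)
      = qbinom (q ^ e) a b + (q ^ e) ^ (b + 1) * qbinom (q ^ e) a (b + 1) := by
  rcases lt_trichotomy b a with hba | rfl | hba
  · have h1 := L1 he hba.le
    have h3 := L3 he hba
    have d2 := one_sub_q_pow_ne he (i := b + 1) (by omega)
    have e1 : qbinom (q ^ e) (a+1) (b+1) = qbinom (q ^ e) a b * (1 - (q ^ e) ^ (a + 1)) / (1 - (q ^ e) ^ (b+1)) := by
      field_simp at h1 ⊢; linear_combination h1
    have e3 : qbinom (q ^ e) a (b+1) = qbinom (q ^ e) a b * (1 - (q ^ e) ^ (a - b)) / (1 - (q ^ e) ^ (b+1)) := by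
      field_simp at h3 ⊢; linear_combination h3
    rw [e1, e3]
    have hp : (q ^ e) ^ (b + 1) * (q ^ e) ^ (a - b) = (q ^ e) ^ (a + 1) := by
      rw [← pow_add]; congr 1; omega
    field_simp
    linear_combination (qbinom (q ^ e) a b) * hp
  · rw [qbinom_self he, qbinom_self he, qbinom_eq_zero _ (by omega)]
    ring
  · rw [qbinom_eq_zero _ (by omega), qbinom_eq_zero _ (by omega),
        qbinom_eq_zero _ (by omega)]
    ring

/-- Pascal II: `[a+1, b+1] = [a, b+1] + x^(a-b) [a, b]`, for `b ≤ a`. -/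
lemma pascal2 {e : ℕ} (he : 1 ≤ e) {a b : ℕ} (h : b ≤ a) :
    qbinom (q ^ e) (a + 1) (b + 1)
      = qbinom (q ^ e) a (b + 1) + (q ^ e) ^ (a - b) * qbinom (q ^ e) a b := by
  rcases eq_or_lt_of_le h with rfl | hba
  · rw [qbinom_self he, qbinom_self he, qbinom_eq_zero _ (by omega), Nat.sub_self]
    ring
  · have h1 := L1 he h
    have h3 := L3 he hba
    have d2 := one_sub_q_pow_ne he (i := b + 1) (by omega)
    have e1 : qbinom (q ^ e) (a+1) (b+1) = qbinom (q ^ e) a b * (1 - (q ^ e) ^ (a + 1)) / (1 - (q ^ e) ^ (b+1)) := by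
      field_simp at h1 ⊢; linear_combination h1
    have e3 : qbinom (q ^ e) a (b+1) = qbinom (q ^ e) a b * (1 - (q ^ e) ^ (a - b)) / (1 - (q ^ e) ^ (b+1)) := by
      field_simp at h3 ⊢; linear_combination h3
    rw [e1, e3]
    have hp : (q ^ e) ^ (a - b) * (q ^ e) ^ (b + 1) = (q ^ e) ^ (a + 1) := by
      rw [← pow_add]; congr 1; omega
    field_simp
    linear_combination (qbinom (q ^ e) a b) * hp

lemma pascal1_q (a b : ℕ) :
    qbinom q (a + 1) (b + 1) = qbinom q a b + q ^ (b + 1) * qbinom q a (b + 1) := by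
  simpa [pow_one] using pascal1 (e := 1) le_rfl a b

lemma pascal2_q {a b : ℕ} (h : b ≤ a) :
    qbinom q (a + 1) (b + 1) = qbinom q a (b + 1) + q ^ (a - b) * qbinom q a b := by
  simpa [pow_one] using pascal2 (e := 1) le_rfl h

lemma pascal1_q2 (a b : ℕ) :
    qbinom (q ^ 2) (a + 1) (b + 1)
      = qbinom (q ^ 2) a b + q ^ (2 * (b + 1)) * qbinom (q ^ 2) a (b + 1) := by
  simpa [pow_mul] using pascal1 (e := 2) (by omega) a b

lemma qbinom_self_q (a : ℕ) : qbinom q a a = 1 := by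
  simpa [pow_one] using qbinom_self (e := 1) le_rfl a

lemma qbinom_self_q2 (a : ℕ) : qbinom (q ^ 2) a a = qbinom (q ^ 2) a a := rfl

lemma choose_succ_two (n : ℕ) : Nat.choose (n + 1) 2 = Nat.choose n 2 + n := by
  rw [Nat.choose_succ_succ, Nat.choose_one_right, Nat.add_comm]

lemma termwise (m k d : ℕ) (hm : 1 ≤ m) :
    q ^ Nat.choose d 2 * qbinom q (m + 1) d * qbinom (q ^ 2) (m + k) m
      = q ^ Nat.choose d 2 * qbinom q m d * qbinom (q ^ 2) (m + k - 1) (m - 1)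
        + (if 1 ≤ d then
            q ^ m * (q ^ Nat.choose (d - 1) 2 * qbinom q (m + 1) (d - 1)
              * qbinom (q ^ 2) (m + k) m) else 0)
        + q ^ (2 * m + Nat.choose d 2) * qbinom q m d * qbinom (q ^ 2) (m + k - 1) m
        - (if 2 ≤ d then
            q ^ (2 * m + Nat.choose (d - 2) 2) * qbinom q m (d - 2)
              * qbinom (q ^ 2) (m + k) m else 0) := by
  obtain ⟨M, rfl⟩ : ∃ M, m = M + 1 := ⟨m - 1, by omega⟩
  have hkk : M + 1 + k - 1 = M + k := by omega
  have hB : qbinom (q ^ 2) (M + 1 + k) (M + 1)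
      = qbinom (q ^ 2) (M + k) M + q ^ (2 * (M + 1)) * qbinom (q ^ 2) (M + k) (M + 1) := by
    have := pascal1_q2 (M + k) M
    rwa [show M + k + 1 = M + 1 + k by omega] at this
  rw [hkk, Nat.add_sub_cancel]
  match d with
  | 0 =>
    rw [hB]
    norm_num [qbinom_zero]
  | 1 =>
    have hA : qbinom q (M + 1 + 1) 1 = qbinom q (M + 1) 1 + q ^ (M + 1) * qbinom q (M + 1) 0 := by
      have := pascal2_q (a := M + 1) (b := 0) (by omega)
      simpa using this
    simp only [show (1:ℕ) - 1 = 0 from rfl, Nat.choose_zero_succ, Nat.choose_one_right,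
      Nat.choose_self]
    norm_num
    rw [hA, hB]
    simp only [qbinom_zero]
    ring
  | (D + 2) =>
    simp only [show D + 2 - 1 = D + 1 from rfl, show D + 2 - 2 = D from rfl,
      if_pos (by omega : 1 ≤ D + 2), if_pos (by omega : 2 ≤ D + 2)]
    have hc1 : Nat.choose (D + 1) 2 = Nat.choose D 2 + D := choose_succ_two D
    have hc2 : Nat.choose (D + 2) 2 = Nat.choose D 2 + D + (D + 1) := by
      rw [choose_succ_two (D + 1), hc1]
    rcases le_or_gt (D + 1) (M + 1) with hle | hgt
    · -- d ≤ m + 1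
      obtain ⟨f, hf⟩ : ∃ f, M + 1 = D + 1 + f := ⟨M - D, by omega⟩
      have hA1 : qbinom q (M + 1 + 1) (D + 2)
          = qbinom q (M + 1) (D + 2) + q ^ f * qbinom q (M + 1) (D + 1) := by
        have := pascal2_q (a := M + 1) (b := D + 1) (by omega)
        rwa [show M + 1 - (D + 1) = f by omega] at this
      have hA2 : qbinom q (M + 1 + 1) (D + 1)
          = qbinom q (M + 1) (D + 1) + q ^ (f + 1) * qbinom q (M + 1) D := by
        have := pascal2_q (a := M + 1) (b := D) (by omega)
        rwa [show M + 1 - D = f + 1 by omega] at this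
      rw [hA1, hA2, hB, hc1, hc2, hf]
      ring
    · -- d ≥ m + 2
      rcases eq_or_lt_of_le (show M + 2 ≤ D + 1 by omega) with heq | hgt2
      · -- d = m + 2, i.e. D = M + 1
        have hD : D = M + 1 := by omega
        subst hD
        rw [qbinom_eq_zero q (a := M + 1 + 1) (by omega),
            qbinom_eq_zero q (a := M + 1) (b := M + 1 + 2) (by omega),
            qbinom_self_q, qbinom_self_q, hc1, hc2]
        ring
      · -- d ≥ m + 3
        rw [qbinom_eq_zero q (a := M + 1 + 1) (by omega),
            qbinom_eq_zero q (a := M + 1) (b := D + 2) (by omega),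
            qbinom_eq_zero q (a := M + 1 + 1) (b := D + 1) (by omega),
            qbinom_eq_zero q (a := M + 1) (b := D) (by omega)]
        ring

noncomputable def Lsum (m n : ℕ) : RatFunc ℚ :=
  ∑ k ∈ Finset.range (n / 2 + 1),
    q ^ Nat.choose (n - 2 * k) 2 * qbinom q (m + 1) (n - 2 * k) * qbinom (q ^ 2) (m + k) m

noncomputable def Gfun (m n k : ℕ) : RatFunc ℚ :=
  if n < 2 * k then 0
  else q ^ (2 * (m + 1) + Nat.choose (n - 2 * k) 2) * qbinom q (m + 1) (n - 2 * k)
    * qbinom (q ^ 2) (m + k) (m + 1)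

lemma Lsum_zero_left (n : ℕ) : Lsum 0 n = 1 := by
  rw [Lsum, Finset.sum_eq_single (n / 2)]
  · have h1 : n - 2 * (n / 2) = 0 ∨ n - 2 * (n / 2) = 1 := by omega
    rcases h1 with h | h <;> rw [h]
    · simp [qbinom_zero]
    · simp [qbinom_zero, qbinom_self_q, Nat.choose_self]
  · intro k hk hne
    rw [Finset.mem_range] at hk
    rw [qbinom_eq_zero q (show (1:ℕ) < n - 2 * k by omega)]
    ring
  · intro h
    exact absurd (Finset.self_mem_range_succ _) h

lemma Lsum_zero_right (m : ℕ) : Lsum m 0 = 1 := by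
  rw [Lsum]
  simp [qbinom_zero, qbinom_self (e := 2) (by omega)]

lemma Lsum_eq (m : ℕ) : ∀ n, Lsum m n = qbinom q (m + n) m := by
  induction m with
  | zero =>
    intro n
    rw [Lsum_zero_left, Nat.zero_add, qbinom, if_pos (Nat.zero_le n)]
    simp
  | succ m ihm =>
    intro n
    induction n with
    | zero =>
      rw [Lsum_zero_right, Nat.add_zero, qbinom_self_q]
    | succ n ihn =>
      have key : ∀ k ∈ Finset.range ((n + 1) / 2 + 1),
          q ^ Nat.choose (n + 1 - 2 * k) 2 * qbinom q (m + 1 + 1) (n + 1 - 2 * k)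
              * qbinom (q ^ 2) (m + 1 + k) (m + 1)
            = q ^ Nat.choose (n + 1 - 2 * k) 2 * qbinom q (m + 1) (n + 1 - 2 * k)
                * qbinom (q ^ 2) (m + k) m
              + (if k ∈ Finset.range (n / 2 + 1) then
                  q ^ (m + 1) * (q ^ Nat.choose (n - 2 * k) 2
                    * qbinom q (m + 1 + 1) (n - 2 * k)
                    * qbinom (q ^ 2) (m + 1 + k) (m + 1)) else 0)
              + (Gfun m (n + 1) k - Gfun m (n + 1) (k + 1)) := by
        intro k hk
        rw [Finset.mem_range] at hk
        have hkle : 2 * k ≤ n + 1 := by omega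
        have hTk := termwise (m + 1) k (n + 1 - 2 * k) (by omega)
        simp only [show m + 1 + k - 1 = m + k from by omega,
          show m + 1 - 1 = m from rfl] at hTk
        have hif1 : (if 1 ≤ n + 1 - 2 * k then
            q ^ (m + 1) * (q ^ Nat.choose (n + 1 - 2 * k - 1) 2
              * qbinom q (m + 1 + 1) (n + 1 - 2 * k - 1)
              * qbinom (q ^ 2) (m + 1 + k) (m + 1)) else 0)
            = (if k ∈ Finset.range (n / 2 + 1) then
                q ^ (m + 1) * (q ^ Nat.choose (n - 2 * k) 2
                  * qbinom q (m + 1 + 1) (n - 2 * k)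
                  * qbinom (q ^ 2) (m + 1 + k) (m + 1)) else 0) := by
          by_cases h2 : 2 * k ≤ n
          · rw [if_pos (by omega), if_pos (by simp [Finset.mem_range]; omega),
              show n + 1 - 2 * k - 1 = n - 2 * k from by omega]
          · rw [if_neg (by omega), if_neg (by simp [Finset.mem_range]; omega)]
        have hG1 : q ^ (2 * (m + 1) + Nat.choose (n + 1 - 2 * k) 2)
            * qbinom q (m + 1) (n + 1 - 2 * k) * qbinom (q ^ 2) (m + k) (m + 1)
            = Gfun m (n + 1) k := by
          rw [Gfun, if_neg (by omega)]
        have hG2 : (if 2 ≤ n + 1 - 2 * k then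
            q ^ (2 * (m + 1) + Nat.choose (n + 1 - 2 * k - 2) 2)
              * qbinom q (m + 1) (n + 1 - 2 * k - 2)
              * qbinom (q ^ 2) (m + 1 + k) (m + 1) else 0)
            = Gfun m (n + 1) (k + 1) := by
          by_cases h2 : 2 * (k + 1) ≤ n + 1
          · rw [if_pos (by omega), Gfun, if_neg (by omega),
              show n + 1 - 2 * (k + 1) = n + 1 - 2 * k - 2 from by omega,
              show m + (k + 1) = m + 1 + k from by omega]
          · rw [if_neg (by omega), Gfun, if_pos (by omega)]
        rw [hTk, hif1, hG1, hG2]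
        ring
      have hstep : Lsum (m + 1) (n + 1)
          = Lsum m (n + 1) + q ^ (m + 1) * Lsum (m + 1) n
            + (Gfun m (n + 1) 0 - Gfun m (n + 1) ((n + 1) / 2 + 1)) := by
        rw [Lsum, Finset.sum_congr rfl key, Finset.sum_add_distrib, Finset.sum_add_distrib,
          Finset.sum_range_sub' (fun k => Gfun m (n + 1) k)]
        congr 1
        congr 1
        have hfilter : Finset.filter (fun k => k ∈ Finset.range (n / 2 + 1))
              (Finset.range ((n + 1) / 2 + 1)) = Finset.range (n / 2 + 1) := by
            ext x
            simp only [Finset.mem_filter, Finset.mem_range]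
            omega
        rw [← Finset.sum_filter, hfilter, Lsum, Finset.mul_sum]
      have hG0 : Gfun m (n + 1) 0 = 0 := by
        rw [Gfun, if_neg (by omega)]
        simp [qbinom_eq_zero _ (lt_add_one m)]
      have hGend : Gfun m (n + 1) ((n + 1) / 2 + 1) = 0 := by
        rw [Gfun, if_pos (by omega)]
      rw [hstep, hG0, hGend, ihn, ihm (n + 1)]
      have hp := pascal1_q (m + n + 1) m
      rw [show m + n + 1 + 1 = m + 1 + (n + 1) from by omega,
          show m + n + 1 = m + (n + 1) from by omega] at hp
      rw [hp, show m + 1 + n = m + (n + 1) from by omega]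
      ring

theorem stmt_12 (n m : ℕ) :
    ∑ k ∈ Finset.range (n / 2 + 1),
      q ^ Nat.choose (n - 2 * k) 2 * qbinom q (m + 1) (n - 2 * k) * qbinom (q ^ 2) (m + k) m
    = qbinom q (m + n) m := Lsum_eq m n
end
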